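/- Suppose φ is holomorphic on an open neighborhood of X, |φ(z)| = 1 for all z ∈ B, φ(0) = 0, φ(1) = 1, and {z ∈ X : φ(z) = 1} = {1, p₁, p₂} with p₁ ∈ B₁ and p₂ ∈ B₂. If every zero of φ in R is real, then p₁ and p₂ are real; that is, p₁ ∈ {c₁ − r₁, c₁ + r₁} and p₂ ∈ {c₂ − r₂, c₂ + r₂}. -/

import Mathlib

noncomputable section

open scoped ComplexConjugate Matrix

/-- The open unit disk with two closed disks (centered at `c₁`, `c₂` on the real axis,
with radii `r₁`, `r₂`) removed. -/
def Rdom (c₁ c₂ r₁ r₂ : ℝ) : Set ℂ :=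
  {z : ℂ | ‖z‖ < 1 ∧ r₁ < ‖z - (c₁ : ℂ)‖ ∧ r₂ < ‖z - (c₂ : ℂ)‖}

/-- The boundary `B = B₀ ∪ B₁ ∪ B₂` of `Rdom`. -/
def Bbnd (c₁ c₂ r₁ r₂ : ℝ) : Set ℂ :=
  {z : ℂ | ‖z‖ = 1} ∪ {z : ℂ | ‖z - (c₁ : ℂ)‖ = r₁} ∪
    {z : ℂ | ‖z - (c₂ : ℂ)‖ = r₂}

/-- The closure `X = R ∪ B`. -/
def Xcl (c₁ c₂ r₁ r₂ : ℝ) : Set ℂ := Rdom c₁ c₂ r₁ r₂ ∪ Bbnd c₁ c₂ r₁ r₂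

/-- The standing assumptions on the parameters. -/
def GoodParams (c₁ c₂ r₁ r₂ : ℝ) : Prop :=
  -1 < c₁ ∧ c₁ < 0 ∧ 0 < c₂ ∧ c₂ < 1 ∧
    0 < r₁ ∧ r₁ < min |c₁| (1 - |c₁|) ∧ 0 < r₂ ∧ r₂ < min |c₂| (1 - |c₂|)

/-- The two inner boundary circles. -/
def B1 (c₁ r₁ : ℝ) : Set ℂ := {z : ℂ | ‖z - (c₁ : ℂ)‖ = r₁}
def B2 (c₂ r₂ : ℝ) : Set ℂ := {z : ℂ | ‖z - (c₂ : ℂ)‖ = r₂}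

namespace S9
open Complex Filter Set Topology

lemma gp {c₁ c₂ r₁ r₂ : ℝ} (h : GoodParams c₁ c₂ r₁ r₂) :
    -1 < c₁ ∧ c₁ < 0 ∧ 0 < c₂ ∧ c₂ < 1 ∧ 0 < r₁ ∧ r₁ < -c₁ ∧ r₁ < 1 + c₁ ∧
      0 < r₂ ∧ r₂ < c₂ ∧ r₂ < 1 - c₂ := by
  obtain ⟨h1, h2, h3, h4, h5, h6, h7, h8⟩ := h
  rw [abs_of_neg h2, lt_min_iff] at h6
  rw [abs_of_pos h3, lt_min_iff] at h8
  refine ⟨h1, h2, h3, h4, h5, h6.1, by linarith [h6.2], h7, h8.1, h8.2⟩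

lemma abs_conj_sub_real (z : ℂ) (c : ℝ) :
    ‖(conj z - (c : ℂ))‖ = ‖(z - (c : ℂ))‖ := by
  have hc : conj z - (c : ℂ) = conj (z - (c : ℂ)) := by
    rw [map_sub, Complex.conj_ofReal]
  rw [hc, Complex.norm_conj]

lemma conj_mem_Rdom {c₁ c₂ r₁ r₂ : ℝ} {z : ℂ} (hz : z ∈ Rdom c₁ c₂ r₁ r₂) :
    conj z ∈ Rdom c₁ c₂ r₁ r₂ := by
  obtain ⟨h1, h2, h3⟩ := hz
  exact ⟨by rwa [Complex.norm_conj], by rwa [abs_conj_sub_real],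
    by rwa [abs_conj_sub_real]⟩

lemma isOpen_Rdom (c₁ c₂ r₁ r₂ : ℝ) : IsOpen (Rdom c₁ c₂ r₁ r₂) := by
  have : Rdom c₁ c₂ r₁ r₂ = {z : ℂ | ‖z‖ < 1} ∩
      ({z : ℂ | r₁ < ‖(z - (c₁ : ℂ))‖} ∩ {z : ℂ | r₂ < ‖(z - (c₂ : ℂ))‖}) := by
    ext z; simp [Rdom, and_assoc]
  rw [this]
  refine (isOpen_lt continuous_norm continuous_const).inter
    ((isOpen_lt continuous_const ?_).inter (isOpen_lt continuous_const ?_)) <;>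
    exact continuous_norm.comp (continuous_id.sub continuous_const)

lemma abs_sub_abs_le' (z w : ℂ) : ‖z‖ - ‖w‖ ≤ ‖(z - w)‖ := by
  simpa using norm_sub_norm_le z w

lemma Xcl_eq {c₁ c₂ r₁ r₂ : ℝ} (h : GoodParams c₁ c₂ r₁ r₂) :
    Xcl c₁ c₂ r₁ r₂ = {z : ℂ | ‖z‖ ≤ 1 ∧ r₁ ≤ ‖(z - (c₁ : ℂ))‖ ∧
      r₂ ≤ ‖(z - (c₂ : ℂ))‖} := by
  obtain ⟨h1, h2, h3, h4, h5, h6, h7, h8, h9, h10⟩ := gp h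
  have habs12 : ‖((c₁ : ℂ) - (c₂ : ℂ))‖ = c₂ - c₁ := by
    rw [← Complex.ofReal_sub, Complex.norm_real, Real.norm_eq_abs, abs_of_neg (by linarith)]; ring
  ext z
  constructor
  · rintro (⟨hz1, hz2, hz3⟩ | hB)
    · exact ⟨hz1.le, hz2.le, hz3.le⟩
    · rcases hB with ((hz : ‖z‖ = 1) | (hz : ‖(z - (c₁:ℂ))‖ = r₁)) |
        (hz : ‖(z - (c₂:ℂ))‖ = r₂)
      · refine ⟨hz.le, ?_, ?_⟩
        · have := abs_sub_abs_le' z (c₁ : ℂ)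
          rw [hz, Complex.norm_real, Real.norm_eq_abs, abs_of_neg h2] at this
          linarith
        · have := abs_sub_abs_le' z (c₂ : ℂ)
          rw [hz, Complex.norm_real, Real.norm_eq_abs, abs_of_pos h3] at this
          linarith
      · have hz1 : ‖z‖ ≤ ‖(z - (c₁:ℂ))‖ + ‖((c₁:ℂ))‖ := by
          simpa using norm_add_le (z - (c₁:ℂ)) ((c₁:ℂ))
        have hz2 : ‖((c₁:ℂ) - (c₂:ℂ))‖ ≤ ‖(z - (c₁:ℂ))‖ +
            ‖(z - (c₂:ℂ))‖ := by
          have := norm_sub_le_norm_sub_add_norm_sub ((c₁:ℂ)) z ((c₂:ℂ))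
          rwa [norm_sub_rev (c₁:ℂ) z] at this
        rw [hz] at hz1 hz2
        rw [Complex.norm_real, Real.norm_eq_abs, abs_of_neg h2] at hz1
        rw [habs12] at hz2
        exact ⟨by linarith, hz.ge, by linarith⟩
      · have hz1 : ‖z‖ ≤ ‖(z - (c₂:ℂ))‖ + ‖((c₂:ℂ))‖ := by
          simpa using norm_add_le (z - (c₂:ℂ)) ((c₂:ℂ))
        have hz2 : ‖((c₁:ℂ) - (c₂:ℂ))‖ ≤ ‖(z - (c₁:ℂ))‖ +
            ‖(z - (c₂:ℂ))‖ := by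
          have := norm_sub_le_norm_sub_add_norm_sub ((c₁:ℂ)) z ((c₂:ℂ))
          rwa [norm_sub_rev (c₁:ℂ) z] at this
        rw [hz] at hz1 hz2
        rw [Complex.norm_real, Real.norm_eq_abs, abs_of_pos h3] at hz1
        rw [habs12] at hz2
        exact ⟨by linarith, by linarith, hz.ge⟩
  · rintro ⟨hz1, hz2, hz3⟩
    rcases eq_or_lt_of_le hz1 with he | hlt
    · exact Or.inr (Or.inl (Or.inl he))
    rcases eq_or_lt_of_le hz2 with he | hlt2
    · exact Or.inr (Or.inl (Or.inr he.symm))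
    rcases eq_or_lt_of_le hz3 with he | hlt3
    · exact Or.inr (Or.inr he.symm)
    exact Or.inl ⟨hlt, hlt2, hlt3⟩

lemma isClosed_Xcl {c₁ c₂ r₁ r₂ : ℝ} (h : GoodParams c₁ c₂ r₁ r₂) :
    IsClosed (Xcl c₁ c₂ r₁ r₂) := by
  rw [Xcl_eq h]
  have : {z : ℂ | ‖z‖ ≤ 1 ∧ r₁ ≤ ‖(z - (c₁ : ℂ))‖ ∧
      r₂ ≤ ‖(z - (c₂ : ℂ))‖} = {z : ℂ | ‖z‖ ≤ 1} ∩
      ({z : ℂ | r₁ ≤ ‖(z - (c₁ : ℂ))‖} ∩ {z : ℂ | r₂ ≤ ‖(z - (c₂ : ℂ))‖}) := by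
    ext z; simp [and_assoc]
  rw [this]
  refine (isClosed_le continuous_norm continuous_const).inter
    ((isClosed_le continuous_const ?_).inter (isClosed_le continuous_const ?_)) <;>
    exact continuous_norm.comp (continuous_id.sub continuous_const)

lemma closure_Rdom_subset {c₁ c₂ r₁ r₂ : ℝ} (h : GoodParams c₁ c₂ r₁ r₂) :
    closure (Rdom c₁ c₂ r₁ r₂) ⊆ Xcl c₁ c₂ r₁ r₂ :=
  closure_minimal (subset_union_left) (isClosed_Xcl h)

lemma mem_Bbnd_of_not_R {c₁ c₂ r₁ r₂ : ℝ} (h : GoodParams c₁ c₂ r₁ r₂) {z : ℂ}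
    (hz : z ∈ Xcl c₁ c₂ r₁ r₂) (hzR : z ∉ Rdom c₁ c₂ r₁ r₂) : z ∈ Bbnd c₁ c₂ r₁ r₂ := by
  rw [Xcl_eq h] at hz
  obtain ⟨h1, h2, h3⟩ := hz
  rcases eq_or_lt_of_le h1 with he | hlt
  · exact Or.inl (Or.inl he)
  rcases eq_or_lt_of_le h2 with he | hlt2
  · exact Or.inl (Or.inr he.symm)
  rcases eq_or_lt_of_le h3 with he | hlt3
  · exact Or.inr he.symm
  exact absurd ⟨hlt, hlt2, hlt3⟩ hzR

lemma conj_mem_Xcl {c₁ c₂ r₁ r₂ : ℝ} (h : GoodParams c₁ c₂ r₁ r₂) {z : ℂ}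
    (hz : z ∈ Xcl c₁ c₂ r₁ r₂) : conj z ∈ Xcl c₁ c₂ r₁ r₂ := by
  rw [Xcl_eq h] at hz ⊢
  obtain ⟨h1, h2, h3⟩ := hz
  exact ⟨by rwa [Complex.norm_conj], by rwa [abs_conj_sub_real], by rwa [abs_conj_sub_real]⟩

lemma conj_mem_Bbnd {c₁ c₂ r₁ r₂ : ℝ} {z : ℂ} (hz : z ∈ Bbnd c₁ c₂ r₁ r₂) :
    conj z ∈ Bbnd c₁ c₂ r₁ r₂ := by
  rcases hz with (hz | hz) | hz
  · exact Or.inl (Or.inl (by rw [Set.mem_setOf_eq, Complex.norm_conj]; exact hz))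
  · exact Or.inl (Or.inr (by rw [Set.mem_setOf_eq, abs_conj_sub_real]; exact hz))
  · exact Or.inr (by rw [Set.mem_setOf_eq, abs_conj_sub_real]; exact hz)

section
variable {c₁ c₂ r₁ r₂ : ℝ}
  (h1 : -1 < c₁) (h2 : c₁ < 0) (h3 : 0 < c₂) (h4 : c₂ < 1) (h5 : 0 < r₁)
  (h6 : r₁ < -c₁) (h7 : r₁ < 1 + c₁) (h8 : 0 < r₂) (h9 : r₂ < c₂) (h10 : r₂ < 1 - c₂)

include h1 h2 h3 h4 h5 h6 h7 h8 h9 h10 in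
lemma circle1_subset_closure {p : ℂ} (hp : ‖(p - (c₁ : ℂ))‖ = r₁) :
    p ∈ closure (Rdom c₁ c₂ r₁ r₂) := by
  set f : ℝ → ℂ := fun t => (c₁ : ℂ) + (t : ℂ) * (p - (c₁ : ℂ)) with hf
  have hft : Tendsto f (𝓝[>] (1 : ℝ)) (𝓝 p) := by
    have hc : Continuous f := by continuity
    have := (hc.tendsto 1).mono_left (nhdsWithin_le_nhds (s := Ioi (1:ℝ)))
    simpa [hf] using this
  apply mem_closure_of_tendsto hft
  have ht0 : (1:ℝ) < min ((1 + c₁)/r₁) ((c₂ - c₁ - r₂)/r₁) := by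
    rw [lt_min_iff]
    constructor <;> rw [lt_div_iff₀ h5] <;> linarith
  filter_upwards [Ioo_mem_nhdsGT_of_mem (Set.mem_Ico.2 ⟨le_refl (1:ℝ), ht0⟩)] with t ht
  obtain ⟨hta, htb⟩ := ht
  rw [lt_min_iff] at htb
  have htb1 : t * r₁ < 1 + c₁ := by
    have := htb.1; rw [lt_div_iff₀ h5] at this; linarith
  have htb2 : t * r₁ < c₂ - c₁ - r₂ := by
    have := htb.2; rw [lt_div_iff₀ h5] at this; linarith
  have habs : ‖((t:ℂ) * (p - (c₁:ℂ)))‖ = t * r₁ := by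
    rw [norm_mul, Complex.norm_real, Real.norm_eq_abs, hp, abs_of_pos (by linarith)]
  refine ⟨?_, ?_, ?_⟩
  · have htri : ‖(f t)‖ ≤ ‖((c₁:ℂ))‖ + ‖((t:ℂ) * (p - (c₁:ℂ)))‖ :=
      norm_add_le _ _
    rw [habs, Complex.norm_real, Real.norm_eq_abs, abs_of_neg h2] at htri
    linarith
  · have : f t - (c₁:ℂ) = (t:ℂ) * (p - (c₁:ℂ)) := by rw [hf]; ring
    rw [this, habs]
    nlinarith
  · have hsub : ((c₁:ℂ) - (c₂:ℂ)) - (-((t:ℂ) * (p - (c₁:ℂ)))) = f t - (c₂:ℂ) := by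
      rw [hf]; ring
    have htri := abs_sub_abs_le' ((c₁:ℂ) - (c₂:ℂ)) (-((t:ℂ) * (p - (c₁:ℂ))))
    rw [hsub] at htri
    rw [norm_neg] at htri
    rw [habs] at htri
    have h12 : ‖((c₁:ℂ) - (c₂:ℂ))‖ = c₂ - c₁ := by
      rw [← Complex.ofReal_sub, Complex.norm_real, Real.norm_eq_abs, abs_of_neg (by linarith)]; ring
    rw [h12] at htri
    linarith

include h1 h2 h3 h4 h5 h6 h7 h8 h9 h10 in
lemma circle2_subset_closure {p : ℂ} (hp : ‖(p - (c₂ : ℂ))‖ = r₂) :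
    p ∈ closure (Rdom c₁ c₂ r₁ r₂) := by
  set f : ℝ → ℂ := fun t => (c₂ : ℂ) + (t : ℂ) * (p - (c₂ : ℂ)) with hf
  have hft : Tendsto f (𝓝[>] (1 : ℝ)) (𝓝 p) := by
    have hc : Continuous f := by continuity
    have := (hc.tendsto 1).mono_left (nhdsWithin_le_nhds (s := Ioi (1:ℝ)))
    simpa [hf] using this
  apply mem_closure_of_tendsto hft
  have ht0 : (1:ℝ) < min ((1 - c₂)/r₂) ((c₂ - c₁ - r₁)/r₂) := by
    rw [lt_min_iff]
    constructor <;> rw [lt_div_iff₀ h8] <;> linarith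
  filter_upwards [Ioo_mem_nhdsGT_of_mem (Set.mem_Ico.2 ⟨le_refl (1:ℝ), ht0⟩)] with t ht
  obtain ⟨hta, htb⟩ := ht
  rw [lt_min_iff] at htb
  have htb1 : t * r₂ < 1 - c₂ := by
    have := htb.1; rw [lt_div_iff₀ h8] at this; linarith
  have htb2 : t * r₂ < c₂ - c₁ - r₁ := by
    have := htb.2; rw [lt_div_iff₀ h8] at this; linarith
  have habs : ‖((t:ℂ) * (p - (c₂:ℂ)))‖ = t * r₂ := by
    rw [norm_mul, Complex.norm_real, Real.norm_eq_abs, hp, abs_of_pos (by linarith)]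
  refine ⟨?_, ?_, ?_⟩
  · have htri : ‖(f t)‖ ≤ ‖((c₂:ℂ))‖ + ‖((t:ℂ) * (p - (c₂:ℂ)))‖ :=
      norm_add_le _ _
    rw [habs, Complex.norm_real, Real.norm_eq_abs, abs_of_pos h3] at htri
    linarith
  · have hsub : ((c₂:ℂ) - (c₁:ℂ)) - (-((t:ℂ) * (p - (c₂:ℂ)))) = f t - (c₁:ℂ) := by
      rw [hf]; ring
    have htri := abs_sub_abs_le' ((c₂:ℂ) - (c₁:ℂ)) (-((t:ℂ) * (p - (c₂:ℂ))))
    rw [hsub] at htri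
    rw [norm_neg] at htri
    rw [habs] at htri
    have h12 : ‖((c₂:ℂ) - (c₁:ℂ))‖ = c₂ - c₁ := by
      rw [← Complex.ofReal_sub, Complex.norm_real, Real.norm_eq_abs, abs_of_pos (by linarith)]
    rw [h12] at htri
    linarith
  · have : f t - (c₂:ℂ) = (t:ℂ) * (p - (c₂:ℂ)) := by rw [hf]; ring
    rw [show (r₂ < ‖(f t - (c₂:ℂ))‖) = (r₂ < ‖((t:ℂ) * (p - (c₂:ℂ)))‖) from by rw [this], habs]
    nlinarith

include h1 h2 h3 h4 h5 h6 h7 h8 h9 h10 in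
lemma one_mem_closure : (1 : ℂ) ∈ closure (Rdom c₁ c₂ r₁ r₂) := by
  have hft : Tendsto (fun t : ℝ => (t : ℂ)) (𝓝[<] (1 : ℝ)) (𝓝 1) := by
    have := ((Complex.continuous_ofReal).tendsto 1).mono_left
      (nhdsWithin_le_nhds (s := Iio (1:ℝ)))
    simpa using this
  apply mem_closure_of_tendsto hft
  have hlt : c₂ + r₂ < 1 := by linarith
  filter_upwards [Ioo_mem_nhdsLT_of_mem (Set.mem_Ioc.2 ⟨hlt, le_refl (1:ℝ)⟩)] with t ht
  obtain ⟨hta, htb⟩ := ht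
  have ht0 : 0 < t := by linarith
  refine ⟨by rwa [Complex.norm_real, Real.norm_eq_abs, abs_of_pos ht0], ?_, ?_⟩
  · rw [show ((t:ℂ) - (c₁:ℂ)) = ((t - c₁ : ℝ):ℂ) from by push_cast; ring, Complex.norm_real, Real.norm_eq_abs,
      abs_of_pos (by linarith : (0:ℝ) < t - c₁)]
    linarith
  · rw [show ((t:ℂ) - (c₂:ℂ)) = ((t - c₂ : ℝ):ℂ) from by push_cast; ring, Complex.norm_real, Real.norm_eq_abs,
      abs_of_pos (by linarith : (0:ℝ) < t - c₂)]
    linarith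



set_option linter.unusedSectionVars false

set_option maxHeartbeats 1000000 in
include h1 h2 h3 h4 h5 h6 h7 h8 h9 h10 in
lemma isPreconnected_Rdom : IsPreconnected (Rdom c₁ c₂ r₁ r₂) := by
  set s : ℝ := (max (-c₁ + r₁) (c₂ + r₂) + 1) / 2 with hs_def
  have hmax1 : -c₁ + r₁ < 1 := by linarith
  have hmax2 : c₂ + r₂ < 1 := by linarith
  have hmaxlt : max (-c₁ + r₁) (c₂ + r₂) < 1 := max_lt hmax1 hmax2
  have h1s : -c₁ + r₁ < s := by
    have := le_max_left (-c₁ + r₁) (c₂ + r₂); rw [hs_def]; linarith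
  have h2s : c₂ + r₂ < s := by
    have := le_max_right (-c₁ + r₁) (c₂ + r₂); rw [hs_def]; linarith
  have hs1 : s < 1 := by rw [hs_def]; linarith
  have hs0 : 0 < s := by linarith
  -- the sphere of radius s is inside Rdom
  have habs_of_sphere : ∀ z ∈ Metric.sphere (0:ℂ) s, ‖z‖ = s := by
    intro z hz
    simpa [Complex.dist_eq] using hz
  have hRd : ∀ z : ℂ, ‖z‖ < 1 → s ≤ ‖z‖ → z ∈ Rdom c₁ c₂ r₁ r₂ := by
    intro z hz1 hzs
    refine ⟨hz1, ?_, ?_⟩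
    · have := abs_sub_abs_le' z ((c₁:ℂ))
      rw [Complex.norm_real, Real.norm_eq_abs, abs_of_neg h2] at this
      exact lt_of_lt_of_le (by linarith) this
    · have := abs_sub_abs_le' z ((c₂:ℂ))
      rw [Complex.norm_real, Real.norm_eq_abs, abs_of_pos h3] at this
      exact lt_of_lt_of_le (by linarith) this
  have hsphere : Metric.sphere (0:ℂ) s ⊆ Rdom c₁ c₂ r₁ r₂ := by
    intro z hz
    have := habs_of_sphere z hz
    exact hRd z (by rw [this]; exact hs1) (by rw [this])
  have hsmem : (s:ℂ) ∈ Metric.sphere (0:ℂ) s := by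
    simp [Complex.dist_eq, Complex.norm_real, Real.norm_eq_abs, abs_of_pos hs0]
  have hsph_pre : IsPreconnected (Metric.sphere (0:ℂ) s) := by
    refine (isConnected_sphere ?_ 0 hs0.le).isPreconnected
    rw [Complex.rank_real_complex]
    norm_num
  set Rout : Set ℂ := Rdom c₁ c₂ r₁ r₂ ∩ {z | s ≤ ‖z‖} with hRout_def
  set Rin : Set ℂ := Rdom c₁ c₂ r₁ r₂ ∩ {z | ‖z‖ ≤ s} with hRin_def
  -- Rout is preconnected
  have houtP : ∀ z ∈ Rout, segment ℝ z ((s / ‖z‖) • z) ⊆ Rout ∧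
      ((s / ‖z‖) • z) ∈ Metric.sphere (0:ℂ) s := by
    intro z hz
    have ht0 : 0 < ‖z‖ := lt_of_lt_of_le hs0 hz.2
    constructor
    · rintro x ⟨a, b, ha, hb, hab, rfl⟩
      have hx : a • z + b • ((s / ‖z‖) • z)
          = ((a + b * (s / ‖z‖)) : ℝ) • z := by rw [smul_smul, ← add_smul]
      rw [hx]
      have hdiv1 : s / ‖z‖ ≤ 1 := div_le_one_of_le₀ hz.2 ht0.le
      have hdiv0 : 0 < s / ‖z‖ := div_pos hs0 ht0
      set γ : ℝ := a + b * (s / ‖z‖) with hγ_def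
      have hγ1 : γ ≤ 1 := by rw [hγ_def]; nlinarith
      have hγ2 : s / ‖z‖ ≤ γ := by rw [hγ_def]; nlinarith
      have hγ0 : 0 < γ := lt_of_lt_of_le hdiv0 hγ2
      have habsx : ‖(γ • z)‖ = γ * ‖z‖ := by
        rw [Complex.real_smul, norm_mul, Complex.norm_real, Real.norm_eq_abs, abs_of_pos hγ0]
      have hxs : s ≤ ‖(γ • z)‖ := by
        rw [habsx]
        rw [div_le_iff₀ ht0] at hγ2
        linarith
      have hx1 : ‖(γ • z)‖ < 1 := by
        rw [habsx]
        have : γ * ‖z‖ ≤ ‖z‖ := by nlinarith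
        exact lt_of_le_of_lt this hz.1.1
      exact ⟨hRd _ hx1 hxs, hxs⟩
    · have : ‖((s / ‖z‖) • z)‖ = s := by
        rw [Complex.real_smul, norm_mul, Complex.norm_real, Real.norm_eq_abs, abs_of_pos (div_pos hs0 ht0),
          div_mul_cancel₀ _ ht0.ne']
      simpa [Complex.dist_eq] using this
  have houtpre : IsPreconnected Rout := by
    rcases eq_empty_or_nonempty Rout with he | hne
    · rw [he]; exact isPreconnected_empty
    have hU : Rout = ⋃ z : Rout, (segment ℝ z.1 ((s / ‖z.1‖) • z.1) ∪
        Metric.sphere (0:ℂ) s) := by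
      apply Subset.antisymm
      · intro z hz
        exact mem_iUnion.2 ⟨⟨z, hz⟩, Or.inl (left_mem_segment ℝ _ _)⟩
      · intro z hz
        rcases mem_iUnion.1 hz with ⟨w, hw⟩
        rcases hw with hw | hw
        · exact (houtP w.1 w.2).1 hw
        · have := hsphere hw
          exact ⟨this, (habs_of_sphere z hw).ge⟩
    rw [hU]
    apply isPreconnected_iUnion
    · refine ⟨(s:ℂ), mem_iInter.2 fun z => ?_⟩
      exact Or.inr hsmem
    · intro z
      exact IsPreconnected.union ((s / ‖z.1‖) • z.1)
        (right_mem_segment ℝ _ _) (houtP z.1 z.2).2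
        (convex_segment _ _).isPreconnected hsph_pre
  -- Rin is preconnected
  have hinP : ∀ z ∈ Rin, ∃ w : ℂ, segment ℝ z w ⊆ Rin ∧ w ∈ Metric.sphere (0:ℂ) s := by
    intro z hz
    have habs_z_sq : (‖z‖)^2 = z.re^2 + z.im^2 := by
      rw [Complex.sq_norm, Complex.normSq_apply]; ring
    have hsum : z.re^2 + z.im^2 ≤ s^2 := by
      have := pow_le_pow_left₀ (norm_nonneg z) hz.2 2
      rwa [habs_z_sq] at this
    have hnn : 0 ≤ s^2 - z.re^2 := by nlinarith [sq_nonneg z.im]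
    obtain ⟨y', hy'sq, hy'sign⟩ : ∃ y' : ℝ, y'^2 = s^2 - z.re^2 ∧
        ((z.im ≤ y' ∧ 0 ≤ z.im) ∨ (y' ≤ z.im ∧ z.im ≤ 0)) := by
      rcases le_or_gt 0 z.im with hp | hn
      · refine ⟨Real.sqrt (s^2 - z.re^2), Real.sq_sqrt hnn, Or.inl ⟨?_, hp⟩⟩
        rw [show z.im = |z.im| from (_root_.abs_of_nonneg hp).symm, ← Real.sqrt_sq_eq_abs]
        exact Real.sqrt_le_sqrt (by linarith)
      · refine ⟨-Real.sqrt (s^2 - z.re^2), by rw [neg_pow]; simp [Real.sq_sqrt hnn],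
          Or.inr ⟨?_, hn.le⟩⟩
        rw [neg_le, show -z.im = |z.im| from (_root_.abs_of_neg hn).symm, ← Real.sqrt_sq_eq_abs]
        exact Real.sqrt_le_sqrt (by linarith)
    refine ⟨(⟨z.re, y'⟩ : ℂ), ?_, ?_⟩
    · rintro x ⟨a, b, ha, hb, hab, rfl⟩
      have hre : ∀ (r : ℝ) (v : ℂ), (r • v).re = r * v.re := fun r v => by
        simp [Complex.real_smul, Complex.mul_re]
      have him : ∀ (r : ℝ) (v : ℂ), (r • v).im = r * v.im := fun r v => by
        simp [Complex.real_smul, Complex.mul_im]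
      have hure : (a • z + b • (⟨z.re, y'⟩ : ℂ)).re = z.re := by
        rw [Complex.add_re, hre, hre]
        show a * z.re + b * z.re = z.re
        rw [← add_mul, hab, one_mul]
      have huim : (a • z + b • (⟨z.re, y'⟩ : ℂ)).im = a * z.im + b * y' := by
        rw [Complex.add_im, him, him]
      set q : ℝ := a * z.im + b * y' with hq_def
      have hbounds : z.im^2 ≤ q^2 ∧ q^2 ≤ y'^2 := by
        have him2 : z.im^2 ≤ y'^2 := by rw [hy'sq]; linarith
        rcases hy'sign with ⟨hle, him0⟩ | ⟨hle, him0⟩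
        · have hq1 : z.im ≤ q := by
            rw [hq_def]
            nlinarith [mul_le_mul_of_nonneg_left hle hb]
          have hq2 : q ≤ y' := by
            rw [hq_def]
            nlinarith [mul_le_mul_of_nonneg_left hle ha]
          constructor
          · exact pow_le_pow_left₀ him0 hq1 2
          · exact pow_le_pow_left₀ (by linarith) hq2 2
        · have hq1 : q ≤ z.im := by
            rw [hq_def]
            nlinarith [mul_le_mul_of_nonneg_left hle hb]
          have hq2 : y' ≤ q := by
            rw [hq_def]
            nlinarith [mul_le_mul_of_nonneg_left hle ha]
          constructor
          · nlinarith [mul_nonneg (sub_nonneg.2 hq1) (show (0:ℝ) ≤ -(z.im + q) by linarith)]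
          · nlinarith [mul_nonneg (sub_nonneg.2 hq2) (show (0:ℝ) ≤ -(y' + q) by linarith)]
      have habs_u_sq : (‖(a • z + b • (⟨z.re, y'⟩ : ℂ))‖)^2 = z.re^2 + q^2 := by
        rw [Complex.sq_norm, Complex.normSq_apply, hure, huim]; ring
      have habs_u_le : ‖(a • z + b • (⟨z.re, y'⟩ : ℂ))‖ ≤ s := by
        apply le_of_pow_le_pow_left₀ (two_ne_zero) hs0.le
        rw [habs_u_sq]
        nlinarith [hbounds.2]
      have habs_u_lt : ‖(a • z + b • (⟨z.re, y'⟩ : ℂ))‖ < 1 :=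
        lt_of_le_of_lt habs_u_le hs1
      have hsub_sq : ∀ (v : ℂ) (c : ℝ), (‖(v - (c:ℂ))‖)^2 = (v.re - c)^2 + v.im^2 := by
        intro v c
        rw [Complex.sq_norm, Complex.normSq_apply, Complex.sub_re, Complex.sub_im]
        simp [Complex.ofReal_re, Complex.ofReal_im]
        ring
      refine ⟨⟨habs_u_lt, ?_, ?_⟩, habs_u_le⟩
      · apply lt_of_pow_lt_pow_left₀ 2 (norm_nonneg _)
        rw [hsub_sq, hure, huim]
        have h' := pow_lt_pow_left₀ hz.1.2.1 h5.le (two_ne_zero)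
        rw [hsub_sq] at h'
        nlinarith [hbounds.1]
      · apply lt_of_pow_lt_pow_left₀ 2 (norm_nonneg _)
        rw [hsub_sq, hure, huim]
        have h' := pow_lt_pow_left₀ hz.1.2.2 h8.le (two_ne_zero)
        rw [hsub_sq] at h'
        nlinarith [hbounds.1]
    · have hsq : (‖((⟨z.re, y'⟩ : ℂ))‖)^2 = s^2 := by
        rw [Complex.sq_norm, Complex.normSq_apply]
        show z.re * z.re + y' * y' = s ^ 2
        nlinarith [hy'sq]
      have h1' : ‖((⟨z.re, y'⟩ : ℂ))‖ = s := by
        apply le_antisymm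
        · exact le_of_pow_le_pow_left₀ (two_ne_zero) hs0.le hsq.le
        · exact le_of_pow_le_pow_left₀ (two_ne_zero) (norm_nonneg _) hsq.ge
      simpa [Complex.dist_eq] using h1'
  have hinpre : IsPreconnected Rin := by
    rcases eq_empty_or_nonempty Rin with he | hne
    · rw [he]; exact isPreconnected_empty
    have hw : ∀ z : Rin, ∃ w : ℂ, segment ℝ z.1 w ⊆ Rin ∧ w ∈ Metric.sphere (0:ℂ) s :=
      fun z => hinP z.1 z.2
    choose w hw1 hw2 using hw
    have hU : Rin = ⋃ z : Rin, (segment ℝ z.1 (w z) ∪ Metric.sphere (0:ℂ) s) := by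
      apply Subset.antisymm
      · intro z hz
        exact mem_iUnion.2 ⟨⟨z, hz⟩, Or.inl (left_mem_segment ℝ _ _)⟩
      · intro z hz
        rcases mem_iUnion.1 hz with ⟨v, hv⟩
        rcases hv with hv | hv
        · exact hw1 v hv
        · exact ⟨hsphere hv, (habs_of_sphere z hv).le⟩
    rw [hU]
    apply isPreconnected_iUnion
    · refine ⟨(s:ℂ), mem_iInter.2 fun z => ?_⟩
      exact Or.inr hsmem
    · intro z
      exact IsPreconnected.union (w z) (right_mem_segment ℝ _ _) (hw2 z)
        (convex_segment _ _).isPreconnected hsph_pre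
  have hunion : Rdom c₁ c₂ r₁ r₂ = Rout ∪ Rin := by
    ext z
    constructor
    · intro hz
      rcases le_total s (‖z‖) with hle | hle
      · exact Or.inl ⟨hz, hle⟩
      · exact Or.inr ⟨hz, hle⟩
    · rintro (hz | hz) <;> exact hz.1
  rw [hunion]
  have hsabs : ‖((s:ℝ):ℂ)‖ = s := by
    rw [Complex.norm_real, Real.norm_eq_abs, abs_of_pos hs0]
  exact IsPreconnected.union (s:ℂ) ⟨hsphere hsmem, hsabs.ge⟩ ⟨hsphere hsmem, hsabs.le⟩
    houtpre hinpre
end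

lemma diff_conj_conj {f : ℂ → ℂ} {a : ℂ} (hf : DifferentiableAt ℂ f (conj a)) :
    DifferentiableAt ℂ (fun z => conj (f (conj z))) a := by
  obtain ⟨d, hd⟩ : ∃ d, HasDerivAt f d (conj a) := ⟨_, hf.hasDerivAt⟩
  rw [hasDerivAt_iff_tendsto_slope] at hd
  have h1 : Tendsto (fun z : ℂ => conj z) (𝓝[≠] a) (𝓝[≠] (conj a)) := by
    apply tendsto_nhdsWithin_of_tendsto_nhds_of_eventually_within
    · exact (Complex.continuous_conj.tendsto a).mono_left nhdsWithin_le_nhds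
    · filter_upwards [self_mem_nhdsWithin] with z hz
      simp only [mem_compl_iff, mem_singleton_iff] at hz ⊢
      exact fun hc => hz (by simpa using congrArg conj hc)
  have h2 : Tendsto (slope (fun z => conj (f (conj z))) a) (𝓝[≠] a) (𝓝 (conj d)) := by
    have := (Complex.continuous_conj.tendsto d).comp (hd.comp h1)
    apply this.congr'
    filter_upwards [self_mem_nhdsWithin] with z hz
    simp only [Function.comp_apply, slope_def_field, map_div₀, map_sub, Complex.conj_conj]
  exact (hasDerivAt_iff_tendsto_slope.2 h2).differentiableAt

lemma analyticAt_conj_conj {u : ℂ → ℂ} {a : ℂ} (ha : conj a = a) (hu : AnalyticAt ℂ u a) :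
    AnalyticAt ℂ (fun z => conj (u (conj z))) a := by
  obtain ⟨O, hO_nhds, hO⟩ := hu.eventually_analyticAt.exists_mem
  obtain ⟨O', hO'sub, hO'open, haO'⟩ := mem_nhds_iff.1 hO_nhds
  have hmem : a ∈ O' ∩ (fun z => conj z) ⁻¹' O' := ⟨haO', by simpa [ha] using haO'⟩
  have hopen : IsOpen (O' ∩ (fun z => conj z) ⁻¹' O') :=
    hO'open.inter (hO'open.preimage Complex.continuous_conj)
  refine DifferentiableOn.analyticAt (s := O' ∩ (fun z => conj z) ⁻¹' O') ?_
    (hopen.mem_nhds hmem)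
  intro z hz
  exact (diff_conj_conj ((hO _ (hO'sub hz.2)).differentiableAt)).differentiableWithinAt

lemma key_ext {R V : Set ℂ} (hRo : IsOpen R) (hRsym : ∀ z ∈ R, conj z ∈ R)
    (hV : IsOpen V) (hRV : closure R ⊆ V)
    {f g : ℂ → ℂ} (hf : DifferentiableOn ℂ f V) (hg : DifferentiableOn ℂ g V)
    (hfg : ∀ z ∈ V, g z = conj (f (conj z)))
    (hrealf : ∀ z ∈ R, f z = 0 → z.im = 0)
    (hbd : ∀ z ∈ closure R, z ∉ R → g z ≠ 0) :
    DiffContOnCl ℂ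
      (fun z => if g z = 0 then limUnder (𝓝[≠] z) (fun w => f w / g w) else f z / g z) R := by
  set G : ℂ → ℂ :=
    fun z => if g z = 0 then limUnder (𝓝[≠] z) (fun w => f w / g w) else f z / g z with hG_def
  have hRsubV : R ⊆ V := fun z hz => hRV (subset_closure hz)
  -- at any point of V where g ≠ 0, G is differentiable
  have hG_ne : ∀ a ∈ V, g a ≠ 0 → DifferentiableAt ℂ G a := by
    intro a haV hga
    have hgc : ContinuousAt g a := (hg.differentiableAt (hV.mem_nhds haV)).continuousAt
    have hev : ∀ᶠ z in 𝓝 a, g z ≠ 0 := hgc.eventually_ne hga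
    have hdiv : DifferentiableAt ℂ (fun z => f z / g z) a :=
      (hf.differentiableAt (hV.mem_nhds haV)).div (hg.differentiableAt (hV.mem_nhds haV)) hga
    apply hdiv.congr_of_eventuallyEq
    filter_upwards [hev] with z hz
    simp [hG_def, hz]
  -- at points of R with g = 0, use the factorization argument
  have hG_zero : ∀ a ∈ R, g a = 0 → DifferentiableAt ℂ G a := by
    intro a haR hga
    have haV : a ∈ V := hRsubV haR
    -- a is real and f a = 0
    have hfa' : f (conj a) = 0 := by
      have := hfg a haV
      rw [hga] at this
      have := congrArg conj this
      simpa using this.symm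
    have haim : a.im = 0 := by
      have h' := hrealf (conj a) (hRsym a haR) hfa'
      simpa using h'
    have haconj : conj a = a := Complex.conj_eq_iff_im.2 haim
    have hfa : f a = 0 := by rwa [haconj] at hfa'
    have hfana : AnalyticAt ℂ f a := hf.analyticAt (hV.mem_nhds haV)
    -- the order of f at a is finite
    have horder : analyticOrderAt f a ≠ ⊤ := by
      intro htop
      rw [analyticOrderAt_eq_top] at htop
      obtain ⟨ε, hε, hball⟩ := Metric.eventually_nhds_iff_ball.1
        (htop.and (hRo.eventually_mem haR))
      have hmem : a + ((ε/2 : ℝ) : ℂ) * Complex.I ∈ Metric.ball a ε := by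
        simp only [Metric.mem_ball, Complex.dist_eq]
        rw [show a + ((ε/2 : ℝ) : ℂ) * Complex.I - a = ((ε/2 : ℝ) : ℂ) * Complex.I from by ring, norm_mul, Complex.norm_I, mul_one, Complex.norm_real, Real.norm_eq_abs,
          abs_of_pos (by linarith)]
        linarith
      obtain ⟨hz0, hzR⟩ := hball _ hmem
      have := hrealf _ hzR hz0
      simp [Complex.add_im, Complex.mul_im, Complex.ofReal_re, Complex.ofReal_im] at this
      linarith
    set n : ℕ := (analyticOrderAt f a).toNat with hn_def
    have hn : analyticOrderAt f a = n := (ENat.coe_toNat horder).symm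
    obtain ⟨u, hu, hu0, hfu⟩ := (hfana.analyticOrderAt_eq_natCast).1 hn
    set v : ℂ → ℂ := fun z => conj (u (conj z)) with hv_def
    have hv : AnalyticAt ℂ v a := analyticAt_conj_conj haconj hu
    have hv0 : v a ≠ 0 := by
      simp only [hv_def, haconj, ne_eq, map_eq_zero]
      exact hu0
    -- factorization for g
    have hgv : ∀ᶠ z in 𝓝 a, g z = (z - a) ^ n * v z := by
      have hconj_tendsto : Tendsto (fun z : ℂ => conj z) (𝓝 a) (𝓝 a) := by
        simpa [haconj] using (Complex.continuous_conj.tendsto a)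
      filter_upwards [hV.eventually_mem haV, hconj_tendsto.eventually hfu] with z hzV hzf
      rw [hfg z hzV, hzf]
      simp only [smul_eq_mul, map_mul, map_pow, map_sub, Complex.conj_conj, haconj, hv_def]
    -- n ≥ 1
    have hn0 : n ≠ 0 := by
      intro h0
      rw [h0] at hgv
      have := hgv.self_of_nhds
      simp at this
      rw [hga] at this
      exact hv0 this.symm
    -- the local model u/v
    have hT : DifferentiableAt ℂ (fun z => u z / v z) a :=
      hu.differentiableAt.div hv.differentiableAt hv0
    -- G agrees with u/v near a
    have hvne : ∀ᶠ z in 𝓝 a, v z ≠ 0 := hv.continuousAt.eventually_ne hv0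
    have heq : G =ᶠ[𝓝 a] fun z => u z / v z := by
      have hall : ∀ᶠ z in 𝓝 a, (z ≠ a → (g z = (z - a) ^ n * v z ∧ f z = (z - a) ^ n * u z ∧
          v z ≠ 0)) ∧ (z = a → True) := by
        filter_upwards [hgv, hfu, hvne] with z h1 h2 h3
        exact ⟨fun _ => ⟨h1, by simpa [smul_eq_mul] using h2, h3⟩, fun _ => trivial⟩
      -- the punctured equality f/g = u/v
      have hpunct : (fun w => f w / g w) =ᶠ[𝓝[≠] a] fun z => u z / v z := by
        filter_upwards [eventually_nhdsWithin_of_eventually_nhds hall, self_mem_nhdsWithin]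
          with z hz hz'
        have hzne : z ≠ a := hz'
        obtain ⟨hgz, hfz, hvz⟩ := hz.1 hzne
        have hpow : (z - a) ^ n ≠ 0 := pow_ne_zero _ (sub_ne_zero.2 hzne)
        rw [hgz, hfz, mul_div_mul_left _ _ hpow]
      have hlim : Tendsto (fun w => f w / g w) (𝓝[≠] a) (𝓝 (u a / v a)) := by
        have : Tendsto (fun z => u z / v z) (𝓝[≠] a) (𝓝 (u a / v a)) :=
          (hT.continuousAt.tendsto).mono_left nhdsWithin_le_nhds
        exact this.congr' hpunct.symm
      have hGa : G a = u a / v a := by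
        simp only [hG_def, if_pos hga]
        exact hlim.limUnder_eq
      -- full equality on a neighborhood
      obtain ⟨W, hW_nhds, hW⟩ := hall.exists_mem
      rw [Filter.eventuallyEq_iff_exists_mem]
      refine ⟨W, hW_nhds, fun z hzW => ?_⟩
      rcases eq_or_ne z a with rfl | hzne
      · exact hGa
      · obtain ⟨hgz, hfz, hvz⟩ := (hW z hzW).1 hzne
        have hpow : (z - a) ^ n ≠ 0 := pow_ne_zero _ (sub_ne_zero.2 hzne)
        have hgz0 : g z ≠ 0 := by
          rw [hgz]
          exact mul_ne_zero hpow hvz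
        simp only [hG_def, if_neg hgz0]
        rw [hgz, hfz, mul_div_mul_left _ _ hpow]
    exact hT.congr_of_eventuallyEq heq
  constructor
  · intro z hz
    rcases eq_or_ne (g z) 0 with hgz | hgz
    · exact (hG_zero z hz hgz).differentiableWithinAt
    · exact (hG_ne z (hRsubV hz) hgz).differentiableWithinAt
  · intro z hz
    by_cases hzR : z ∈ R
    · rcases eq_or_ne (g z) 0 with hgz | hgz
      · exact (hG_zero z hzR hgz).continuousAt.continuousWithinAt
      · exact (hG_ne z (hRsubV hzR) hgz).continuousAt.continuousWithinAt
    · have hgz : g z ≠ 0 := hbd z hz hzR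
      exact ((hG_ne z (hRV hz) hgz)).continuousAt.continuousWithinAt

end S9

open Complex Filter Set Topology

/-- If `φ` is holomorphic on a neighborhood of `X`, unimodular on `B`, with
`φ(0) = 0`, `φ(1) = 1` and `φ⁻¹({1}) ∩ X = {1, p₁, p₂}` (`p₁ ∈ B₁`, `p₂ ∈ B₂`), and all zeros of
`φ` in `R` are real, then `p₁ ∈ {c₁ − r₁, c₁ + r₁}` and `p₂ ∈ {c₂ − r₂, c₂ + r₂}`. -/
theorem real_points_of_real_zeros (c₁ c₂ r₁ r₂ : ℝ) (h : GoodParams c₁ c₂ r₁ r₂)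
    (φ : ℂ → ℂ)
    (hφ : ∃ U : Set ℂ, IsOpen U ∧ Xcl c₁ c₂ r₁ r₂ ⊆ U ∧ DifferentiableOn ℂ φ U)
    (hmod : ∀ z ∈ Bbnd c₁ c₂ r₁ r₂, ‖(φ z)‖ = 1)
    (hφ0 : φ 0 = 0) (hφ1 : φ 1 = 1)
    (p₁ p₂ : ℂ) (hp₁ : p₁ ∈ B1 c₁ r₁) (hp₂ : p₂ ∈ B2 c₂ r₂)
    (hone : {z ∈ Xcl c₁ c₂ r₁ r₂ | φ z = 1} = {(1 : ℂ), p₁, p₂})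
    (hreal : ∀ z ∈ Rdom c₁ c₂ r₁ r₂, φ z = 0 → z.im = 0) :
    (p₁ = ((c₁ - r₁ : ℝ) : ℂ) ∨ p₁ = ((c₁ + r₁ : ℝ) : ℂ)) ∧
      (p₂ = ((c₂ - r₂ : ℝ) : ℂ) ∨ p₂ = ((c₂ + r₂ : ℝ) : ℂ)) := by
  obtain ⟨hg1, hg2, hg3, hg4, hg5, hg6, hg7, hg8, hg9, hg10⟩ := S9.gp h
  obtain ⟨U, hUo, hXU, hφU⟩ := hφ
  set V : Set ℂ := U ∩ (fun z => conj z) ⁻¹' U with hV_def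
  have hVo : IsOpen V := hUo.inter (hUo.preimage Complex.continuous_conj)
  have hXV : Xcl c₁ c₂ r₁ r₂ ⊆ V := fun z hz => ⟨hXU hz, hXU (S9.conj_mem_Xcl h hz)⟩
  have hclRX : closure (Rdom c₁ c₂ r₁ r₂) ⊆ Xcl c₁ c₂ r₁ r₂ := S9.closure_Rdom_subset h
  have hclRV : closure (Rdom c₁ c₂ r₁ r₂) ⊆ V := fun z hz => hXV (hclRX hz)
  have hRo : IsOpen (Rdom c₁ c₂ r₁ r₂) := S9.isOpen_Rdom c₁ c₂ r₁ r₂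
  have hRsym : ∀ z ∈ Rdom c₁ c₂ r₁ r₂, conj z ∈ Rdom c₁ c₂ r₁ r₂ :=
    fun z hz => S9.conj_mem_Rdom hz
  have hRV : Rdom c₁ c₂ r₁ r₂ ⊆ V := fun z hz => hclRV (subset_closure hz)
  have hBX : Bbnd c₁ c₂ r₁ r₂ ⊆ Xcl c₁ c₂ r₁ r₂ := Set.subset_union_right
  have hφV : DifferentiableOn ℂ φ V := hφU.mono Set.inter_subset_left
  set ψ : ℂ → ℂ := fun z => conj (φ (conj z)) with hψ_def
  have hψV : DifferentiableOn ℂ ψ V := by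
    intro a ha
    exact (S9.diff_conj_conj (hφU.differentiableAt (hUo.mem_nhds ha.2))).differentiableWithinAt
  have hfg : ∀ z ∈ V, ψ z = conj (φ (conj z)) := fun z _ => rfl
  have hgf : ∀ z ∈ V, φ z = conj (ψ (conj z)) := by
    intro z _
    simp [hψ_def]
  have hrealψ : ∀ z ∈ Rdom c₁ c₂ r₁ r₂, ψ z = 0 → z.im = 0 := by
    intro z hz hz0
    have h0 : φ (conj z) = 0 := by
      have := congrArg conj hz0
      simpa [hψ_def] using this
    have := hreal _ (hRsym z hz) h0
    simpa using this
  have hzero : ∀ z ∈ Rdom c₁ c₂ r₁ r₂, ψ z = 0 → φ z = 0 := by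
    intro z hz h0
    have him : z.im = 0 := hrealψ z hz h0
    have hcz : conj z = z := Complex.conj_eq_iff_im.2 him
    have := hgf z (hRV hz)
    rw [this, hcz, h0, map_zero]
  have hbdb : ∀ z ∈ closure (Rdom c₁ c₂ r₁ r₂), z ∉ Rdom c₁ c₂ r₁ r₂ →
      z ∈ Bbnd c₁ c₂ r₁ r₂ := fun z hz hzR => S9.mem_Bbnd_of_not_R h (hclRX hz) hzR
  have hmodψ : ∀ z ∈ Bbnd c₁ c₂ r₁ r₂, ‖(ψ z)‖ = 1 := by
    intro z hz
    have : ‖(conj (φ (conj z)))‖ = ‖(φ (conj z))‖ := Complex.norm_conj _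
    rw [hψ_def]
    simp only
    rw [this]
    exact hmod _ (S9.conj_mem_Bbnd hz)
  have hbd : ∀ z ∈ closure (Rdom c₁ c₂ r₁ r₂), z ∉ Rdom c₁ c₂ r₁ r₂ → ψ z ≠ 0 := by
    intro z hz hzR h0
    have := hmodψ z (hbdb z hz hzR)
    rw [h0] at this
    simp at this
  have hbd' : ∀ z ∈ closure (Rdom c₁ c₂ r₁ r₂), z ∉ Rdom c₁ c₂ r₁ r₂ → φ z ≠ 0 := by
    intro z hz hzR h0
    have := hmod z (hbdb z hz hzR)
    rw [h0] at this
    simp at this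
  set G : ℂ → ℂ := fun z => if ψ z = 0 then limUnder (𝓝[≠] z) (fun w => φ w / ψ w)
    else φ z / ψ z with hG_def
  set G' : ℂ → ℂ := fun z => if φ z = 0 then limUnder (𝓝[≠] z) (fun w => ψ w / φ w)
    else ψ z / φ z with hG'_def
  have hG : DiffContOnCl ℂ G (Rdom c₁ c₂ r₁ r₂) :=
    S9.key_ext hRo hRsym hVo hclRV hφV hψV hfg hreal hbd
  have hG' : DiffContOnCl ℂ G' (Rdom c₁ c₂ r₁ r₂) :=
    S9.key_ext hRo hRsym hVo hclRV hψV hφV hgf hrealψ hbd'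
  have hRbdd : Bornology.IsBounded (Rdom c₁ c₂ r₁ r₂) := by
    apply (Metric.isBounded_ball (x := (0:ℂ)) (r := 1)).subset
    intro z hz
    simpa [Metric.mem_ball, Complex.dist_eq] using hz.1
  have hGle : ∀ z ∈ closure (Rdom c₁ c₂ r₁ r₂), ‖(G z)‖ ≤ 1 := by
    intro z hz
    have := Complex.norm_le_of_forall_mem_frontier_norm_le (C := 1) hRbdd hG (fun w hw => ?_) hz
    · simpa using this
    · rw [hRo.frontier_eq] at hw
      have hwB := hbdb w hw.1 hw.2
      have hψw0 : ψ w ≠ 0 := hbd w hw.1 hw.2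
      have : G w = φ w / ψ w := by simp [hG_def, hψw0]
      rw [this, norm_div, hmod w hwB, hmodψ w hwB]
      norm_num
  have hG'le : ∀ z ∈ closure (Rdom c₁ c₂ r₁ r₂), ‖(G' z)‖ ≤ 1 := by
    intro z hz
    have := Complex.norm_le_of_forall_mem_frontier_norm_le (C := 1) hRbdd hG' (fun w hw => ?_) hz
    · simpa using this
    · rw [hRo.frontier_eq] at hw
      have hwB := hbdb w hw.1 hw.2
      have hφw0 : φ w ≠ 0 := hbd' w hw.1 hw.2
      have : G' w = ψ w / φ w := by simp [hG'_def, hφw0]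
      rw [this, norm_div, hmod w hwB, hmodψ w hwB]
      norm_num
  -- the point 1 and a nearby point where φ and ψ are nonzero
  have h1X : (1:ℂ) ∈ Xcl c₁ c₂ r₁ r₂ := hBX (Or.inl (Or.inl (by simp)))
  have h1V : (1:ℂ) ∈ V := hXV h1X
  have hφc1 : ContinuousAt φ 1 := (hφV.differentiableAt (hVo.mem_nhds h1V)).continuousAt
  have hψc1 : ContinuousAt ψ 1 := (hψV.differentiableAt (hVo.mem_nhds h1V)).continuousAt
  have hψ1 : ψ 1 = 1 := by
    rw [hψ_def]
    simp only [map_one, hφ1]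
  have h1cl : (1:ℂ) ∈ closure (Rdom c₁ c₂ r₁ r₂) :=
    S9.one_mem_closure hg1 hg2 hg3 hg4 hg5 hg6 hg7 hg8 hg9 hg10
  have hNB : (𝓝[Rdom c₁ c₂ r₁ r₂] (1:ℂ)).NeBot := mem_closure_iff_nhdsWithin_neBot.1 h1cl
  have hev : ∀ᶠ z in 𝓝[Rdom c₁ c₂ r₁ r₂] (1:ℂ), φ z ≠ 0 ∧ ψ z ≠ 0 ∧ z ∈ Rdom c₁ c₂ r₁ r₂ := by
    have e1 : ∀ᶠ z in 𝓝 (1:ℂ), φ z ≠ 0 := hφc1.eventually_ne (by rw [hφ1]; norm_num)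
    have e2 : ∀ᶠ z in 𝓝 (1:ℂ), ψ z ≠ 0 := hψc1.eventually_ne (by rw [hψ1]; norm_num)
    filter_upwards [e1.filter_mono nhdsWithin_le_nhds, e2.filter_mono nhdsWithin_le_nhds,
      self_mem_nhdsWithin] with z h1' h2' h3'
    exact ⟨h1', h2', h3'⟩
  obtain ⟨c, hφc0, hψc0, hcR⟩ := hev.exists
  have hGc : G c = φ c / ψ c := by simp [hG_def, hψc0]
  have hG'c : G' c = ψ c / φ c := by simp [hG'_def, hφc0]
  have hGcabs : ‖(G c)‖ = 1 := by
    have hle1 := hGle c (subset_closure hcR)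
    have hle2 := hG'le c (subset_closure hcR)
    rw [hGc, norm_div] at hle1 ⊢
    rw [hG'c, norm_div] at hle2
    have haφ : 0 < ‖(φ c)‖ := norm_pos_iff.2 hφc0
    have haψ : 0 < ‖(ψ c)‖ := norm_pos_iff.2 hψc0
    rw [div_le_one haψ] at hle1
    rw [div_le_one haφ] at hle2
    have : ‖(φ c)‖ = ‖(ψ c)‖ := le_antisymm hle1 hle2
    rw [this, div_self haψ.ne']
  have hmax : IsMaxOn (norm ∘ G) (Rdom c₁ c₂ r₁ r₂) c := by
    intro z hz
    simp only [Function.comp_apply, Set.mem_setOf_eq]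
    rw [hGcabs]
    exact hGle z (subset_closure hz)
  have hpre : IsPreconnected (Rdom c₁ c₂ r₁ r₂) :=
    S9.isPreconnected_Rdom hg1 hg2 hg3 hg4 hg5 hg6 hg7 hg8 hg9 hg10
  have hconst : EqOn G (Function.const ℂ (G c)) (Rdom c₁ c₂ r₁ r₂) :=
    Complex.eqOn_of_isPreconnected_of_isMaxOn_norm hpre hRo hG.differentiableOn hcR hmax
  have hφψ : ∀ z ∈ Rdom c₁ c₂ r₁ r₂, φ z = G c * ψ z := by
    intro z hz
    rcases eq_or_ne (ψ z) 0 with h0 | h0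
    · rw [h0, hzero z hz h0, mul_zero]
    · have hGz : G z = G c := hconst hz
      simp only [hG_def, if_neg h0] at hGz
      rw [div_eq_iff h0] at hGz
      exact hGz
  have hGc1 : G c = 1 := by
    have ev : φ =ᶠ[𝓝[Rdom c₁ c₂ r₁ r₂] (1:ℂ)] fun z => G c * ψ z := by
      filter_upwards [self_mem_nhdsWithin] with z hz
      exact hφψ z hz
    have t1 : Tendsto φ (𝓝[Rdom c₁ c₂ r₁ r₂] (1:ℂ)) (𝓝 1) := by
      have := hφc1.continuousWithinAt (s := Rdom c₁ c₂ r₁ r₂)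
      rwa [ContinuousWithinAt, hφ1] at this
    have t2 : Tendsto (fun z => G c * ψ z) (𝓝[Rdom c₁ c₂ r₁ r₂] (1:ℂ)) (𝓝 (G c * 1)) := by
      apply Tendsto.mul tendsto_const_nhds
      have := hψc1.continuousWithinAt (s := Rdom c₁ c₂ r₁ r₂)
      rwa [ContinuousWithinAt, hψ1] at this
    have := tendsto_nhds_unique (t1.congr' ev) t2
    rw [mul_one] at this
    exact this.symm
  have hEq : ∀ z ∈ closure (Rdom c₁ c₂ r₁ r₂), φ z = ψ z := by
    intro z hz
    have hNBz : (𝓝[Rdom c₁ c₂ r₁ r₂] z).NeBot := mem_closure_iff_nhdsWithin_neBot.1 hz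
    have hzV : z ∈ V := hclRV hz
    have t1 : Tendsto φ (𝓝[Rdom c₁ c₂ r₁ r₂] z) (𝓝 (φ z)) :=
      ((hφV.differentiableAt (hVo.mem_nhds hzV)).continuousAt).continuousWithinAt
    have t2 : Tendsto ψ (𝓝[Rdom c₁ c₂ r₁ r₂] z) (𝓝 (ψ z)) :=
      ((hψV.differentiableAt (hVo.mem_nhds hzV)).continuousAt).continuousWithinAt
    refine tendsto_nhds_unique (t1.congr' ?_) t2
    filter_upwards [self_mem_nhdsWithin] with w hw
    rw [hφψ w hw, hGc1, one_mul]
  -- a general helper for interpreting members of the fiber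
  have hfiber : ∀ q : ℂ, q ∈ Xcl c₁ c₂ r₁ r₂ → φ q = 1 → q = 1 ∨ q = p₁ ∨ q = p₂ := by
    intro q hqX hq1
    have : q ∈ ({(1:ℂ), p₁, p₂} : Set ℂ) := by
      rw [← hone]
      exact ⟨hqX, hq1⟩
    simpa [Set.mem_insert_iff] using this
  have hsep : ∀ q : ℂ, ‖(q - (c₁:ℂ))‖ = r₁ → ‖(q - (c₂:ℂ))‖ = r₂ → False := by
    intro q hq1 hq2
    have hcc : (q - (c₁:ℂ)) - (q - (c₂:ℂ)) = ((c₂ - c₁ : ℝ) : ℂ) := by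
      push_cast
      ring
    have htri : ‖((q - (c₁:ℂ)) - (q - (c₂:ℂ)))‖ ≤
        ‖(q - (c₁:ℂ))‖ + ‖(q - (c₂:ℂ))‖ := by
      have := norm_add_le (q - (c₁:ℂ)) (-(q - (c₂:ℂ)))
      rw [norm_neg] at this
      simpa [sub_eq_add_neg] using this
    rw [hcc, Complex.norm_real, Real.norm_eq_abs, abs_of_pos (by linarith), hq1, hq2] at htri
    linarith
  -- the conjugate of each pᵢ is fixed
  have hkey : ∀ q : ℂ, q ∈ closure (Rdom c₁ c₂ r₁ r₂) → q ∈ Xcl c₁ c₂ r₁ r₂ → φ q = 1 →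
      φ (conj q) = 1 ∧ conj q ∈ Xcl c₁ c₂ r₁ r₂ := by
    intro q hqcl hqX hq1
    have h1' := hEq q hqcl
    rw [hq1] at h1'
    have h2' := congrArg conj h1'
    simp only [map_one, hψ_def, Complex.conj_conj] at h2'
    exact ⟨h2'.symm, S9.conj_mem_Xcl h hqX⟩
  -- p₁
  have hp₁mem : p₁ ∈ Xcl c₁ c₂ r₁ r₂ ∧ φ p₁ = 1 := by
    have : p₁ ∈ ({(1:ℂ), p₁, p₂} : Set ℂ) := by simp
    rw [← hone] at this
    exact ⟨this.1, this.2⟩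
  have hp₁cl : p₁ ∈ closure (Rdom c₁ c₂ r₁ r₂) :=
    S9.circle1_subset_closure hg1 hg2 hg3 hg4 hg5 hg6 hg7 hg8 hg9 hg10 hp₁
  obtain ⟨hc₁1, hc₁X⟩ := hkey p₁ hp₁cl hp₁mem.1 hp₁mem.2
  have hp₁conj : conj p₁ = p₁ := by
    rcases hfiber (conj p₁) hc₁X hc₁1 with h' | h' | h'
    · exfalso
      have : p₁ = 1 := by
        have := congrArg conj h'
        simpa using this
      rw [this] at hp₁
      have : ‖((1:ℂ) - (c₁:ℂ))‖ = r₁ := hp₁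
      rw [show ((1:ℂ) - (c₁:ℂ)) = ((1 - c₁ : ℝ) : ℂ) from by push_cast; ring,
        Complex.norm_real, Real.norm_eq_abs, abs_of_pos (by linarith)] at this
      linarith
    · exact h'
    · exfalso
      have hB1' : ‖(p₂ - (c₁:ℂ))‖ = r₁ := by
        rw [← h', S9.abs_conj_sub_real]
        exact hp₁
      exact hsep p₂ hB1' hp₂
  -- p₂
  have hp₂mem : p₂ ∈ Xcl c₁ c₂ r₁ r₂ ∧ φ p₂ = 1 := by
    have : p₂ ∈ ({(1:ℂ), p₁, p₂} : Set ℂ) := by simp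
    rw [← hone] at this
    exact ⟨this.1, this.2⟩
  have hp₂cl : p₂ ∈ closure (Rdom c₁ c₂ r₁ r₂) :=
    S9.circle2_subset_closure hg1 hg2 hg3 hg4 hg5 hg6 hg7 hg8 hg9 hg10 hp₂
  obtain ⟨hc₂1, hc₂X⟩ := hkey p₂ hp₂cl hp₂mem.1 hp₂mem.2
  have hp₂conj : conj p₂ = p₂ := by
    rcases hfiber (conj p₂) hc₂X hc₂1 with h' | h' | h'
    · exfalso
      have : p₂ = 1 := by
        have := congrArg conj h'
        simpa using this
      rw [this] at hp₂
      have : ‖((1:ℂ) - (c₂:ℂ))‖ = r₂ := hp₂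
      rw [show ((1:ℂ) - (c₂:ℂ)) = ((1 - c₂ : ℝ) : ℂ) from by push_cast; ring,
        Complex.norm_real, Real.norm_eq_abs, abs_of_pos (by linarith)] at this
      linarith
    · exfalso
      have hB2' : ‖(p₁ - (c₂:ℂ))‖ = r₂ := by
        rw [← h', S9.abs_conj_sub_real]
        exact hp₂
      exact hsep p₁ hp₁ hB2'
    · exact h'
  -- conclude
  have him₁ : p₁.im = 0 := Complex.conj_eq_iff_im.1 hp₁conj
  have him₂ : p₂.im = 0 := Complex.conj_eq_iff_im.1 hp₂conj
  have hre₁ : p₁ = ((p₁.re : ℝ) : ℂ) := by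
    apply Complex.ext <;> simp [him₁]
  have hre₂ : p₂ = ((p₂.re : ℝ) : ℂ) := by
    apply Complex.ext <;> simp [him₂]
  constructor
  · have habs : |p₁.re - c₁| = r₁ := by
      have h'' : ‖(((p₁.re : ℝ) : ℂ) - (c₁:ℂ))‖ = r₁ := by
        rw [← hre₁]; exact hp₁
      rwa [show (((p₁.re : ℝ) : ℂ) - (c₁:ℂ)) = ((p₁.re - c₁ : ℝ) : ℂ) from by push_cast; ring,
        Complex.norm_real, Real.norm_eq_abs] at h''
    rcases abs_eq (le_of_lt hg5) |>.1 habs with h' | h'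
    · right
      rw [hre₁]
      norm_cast
      linarith
    · left
      rw [hre₁]
      norm_cast
      linarith
  · have habs : |p₂.re - c₂| = r₂ := by
      have h'' : ‖(((p₂.re : ℝ) : ℂ) - (c₂:ℂ))‖ = r₂ := by
        rw [← hre₂]; exact hp₂
      rwa [show (((p₂.re : ℝ) : ℂ) - (c₂:ℂ)) = ((p₂.re - c₂ : ℝ) : ℂ) from by push_cast; ring,
        Complex.norm_real, Real.norm_eq_abs] at h''
    rcases abs_eq (le_of_lt hg8) |>.1 habs with h' | h'
    · right
      rw [hre₂]
      norm_cast
      linarith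
    · left
      rw [hre₂]
      norm_cast
      linarith

end
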